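/- Let m ≥ 1, let ε ∈ (0, 1], let δ ∈ (0, 1) be such that c = √(2 ln(1.25/δ)) satisfies c ≥ 3/2, and let v ∈ ℝ^m be a unit vector. Let Ψ be a set of pairs of Gaussian measures of the form (N(μᵢ, Σ₀), N(μⱼ, Σ₀)) with a common symmetric positive definite covariance Σ₀ for each pair and with μᵢ − μⱼ parallel to v, say μᵢ − μⱼ = α v where α = (μᵢ − μⱼ)ᵀv. Let σ² > 0 be such that for every pair in Ψ the matrix Σ₀ + (σ² − (αc/ε)²)·v vᵀ is positive definite. Let ζ be the law of σ·G·v where G is a one-dimensional standard Gaussian (i.e., ζ = N(0, σ² v vᵀ)). Then the additive-noise mechanism with noise ζ satisfies (ε, δ)-distribution privacy with respect to Ψ: for every pair in Ψ and every measurable S ⊆ ℝ^m, (N(μᵢ, Σ₀) ∗ ζ)(S) ≤ e^ε · (N(μⱼ, Σ₀) ∗ ζ)(S) + δ. -/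

import Mathlib

open MeasureTheory ProbabilityTheory

/-- Convolution of two measures on `ℝ^m`: the law of `X + Z` with `X ∼ μ`, `Z ∼ ν` independent. -/
noncomputable def mconv {m : ℕ} (μ ν : Measure (Fin m → ℝ)) : Measure (Fin m → ℝ) :=
  (μ.prod ν).map (fun p => p.1 + p.2)

/-- The Euclidean (`L²`) norm on `ℝ^m`. -/
noncomputable def l2norm {m : ℕ} (x : Fin m → ℝ) : ℝ := Real.sqrt (∑ k, (x k) ^ 2)

/-- The standard Gaussian measure on `ℝ^m`: `m` i.i.d. standard normal coordinates. -/
noncomputable def stdGaussPi (m : ℕ) : Measure (Fin m → ℝ) :=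
  Measure.pi fun _ : Fin m => gaussianReal 0 1

/-- The multivariate Gaussian measure `N(μ, A Aᵀ)` on `ℝ^m`, defined as the law of
`μ + A·G` where `G` is a standard Gaussian vector. -/
noncomputable def gaussN {m : ℕ} (μ : Fin m → ℝ) (A : Matrix (Fin m) (Fin m) ℝ) :
    Measure (Fin m → ℝ) :=
  (stdGaussPi m).map (fun g => μ + A.mulVec g)



namespace DPaux

open Real Set Matrix
open scoped NNReal ENNReal

/-- pointwise product identity for gaussian densities -/
lemma pdf_prod_identity {s t : ℝ≥0} (hs : (0:ℝ) < s) (ht : (0:ℝ) < t) (x z : ℝ) :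
    gaussianPDFReal 0 s x * gaussianPDFReal x t z =
      gaussianPDFReal 0 (s + t) z *
        gaussianPDFReal ((s : ℝ) * z / ((s:ℝ) + t)) (s * t / (s + t)) x := by
  have hst : (0:ℝ) < (s:ℝ) + t := by positivity
  simp only [gaussianPDFReal]
  have hco : ((s * t / (s + t) : ℝ≥0) : ℝ) = (s:ℝ) * t / ((s:ℝ) + t) := by
    push_cast [NNReal.coe_div]
    ring
  have hco2 : (((s + t : ℝ≥0)) : ℝ) = (s:ℝ) + t := by push_cast; ring
  rw [hco, hco2]
  have hconst : (Real.sqrt (2 * π * s))⁻¹ * (Real.sqrt (2 * π * t))⁻¹ =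
      (Real.sqrt (2 * π * ((s:ℝ) + t)))⁻¹ *
        (Real.sqrt (2 * π * ((s:ℝ) * t / ((s:ℝ) + t))))⁻¹ := by
    rw [← mul_inv, ← mul_inv, ← Real.sqrt_mul (by positivity), ← Real.sqrt_mul (by positivity)]
    congr 1
    field_simp
  have hexp : rexp (-(x - 0) ^ 2 / (2 * s)) * rexp (-(z - x) ^ 2 / (2 * t)) =
      rexp (-(z - 0) ^ 2 / (2 * ((s:ℝ) + t))) *
        rexp (-(x - (s:ℝ) * z / ((s:ℝ) + t)) ^ 2 / (2 * ((s:ℝ) * t / ((s:ℝ) + t)))) := by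
    rw [← Real.exp_add, ← Real.exp_add]
    congr 1
    field_simp
    ring
  calc (Real.sqrt (2 * π * s))⁻¹ * rexp (-(x - 0) ^ 2 / (2 * s)) *
        ((Real.sqrt (2 * π * t))⁻¹ * rexp (-(z - x) ^ 2 / (2 * t)))
      = (Real.sqrt (2 * π * s))⁻¹ * (Real.sqrt (2 * π * t))⁻¹ *
        (rexp (-(x - 0) ^ 2 / (2 * s)) * rexp (-(z - x) ^ 2 / (2 * t))) := by ring
    _ = _ := by rw [hconst, hexp]; ring

lemma gauss_conv (s t : ℝ≥0) :
    ((gaussianReal 0 s).prod (gaussianReal 0 t)).map (fun p : ℝ × ℝ => p.1 + p.2) =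
      gaussianReal 0 (s + t) := by
  by_cases hs : s = 0
  · subst hs
    rw [gaussianReal_zero_var, Measure.dirac_prod, Measure.map_map (by fun_prop) (by fun_prop)]
    have : ((fun p : ℝ × ℝ => p.1 + p.2) ∘ Prod.mk (0:ℝ)) = fun y : ℝ => (0:ℝ) + y := rfl
    rw [this]
    simpa using gaussianReal_map_const_add (μ := 0) (v := t) 0
  by_cases ht : t = 0
  · subst ht
    rw [gaussianReal_zero_var, Measure.prod_dirac, Measure.map_map (by fun_prop) (by fun_prop)]
    have : ((fun p : ℝ × ℝ => p.1 + p.2) ∘ fun x : ℝ => (x, (0:ℝ))) = fun x : ℝ => x + 0 := rfl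
    rw [this]
    simpa using gaussianReal_map_add_const (μ := 0) (v := s) 0
  -- main case
  have hs' : (0:ℝ) < s := lt_of_le_of_ne s.coe_nonneg (by exact_mod_cast (Ne.symm hs))
  have ht' : (0:ℝ) < t := lt_of_le_of_ne t.coe_nonneg (by exact_mod_cast (Ne.symm ht))
  have hst : s + t ≠ 0 := by positivity
  have hq : s * t / (s + t) ≠ 0 := by positivity
  ext A hA
  rw [Measure.map_apply (by fun_prop) hA, Measure.prod_apply (by measurability)]
  have key : ∀ x : ℝ, (gaussianReal 0 t) (Prod.mk x ⁻¹' ((fun p : ℝ × ℝ => p.1 + p.2) ⁻¹' A))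
      = ∫⁻ z in A, gaussianPDF x t z := by
    intro x
    have h1 : (Prod.mk x ⁻¹' ((fun p : ℝ × ℝ => p.1 + p.2) ⁻¹' A)) = (fun y => x + y) ⁻¹' A := rfl
    rw [h1, ← Measure.map_apply (by fun_prop) hA, gaussianReal_map_const_add, zero_add,
      gaussianReal_of_var_ne_zero _ ht, withDensity_apply _ hA]
  simp_rw [key]
  have hmeas_pair : Measurable (fun p : ℝ × ℝ => gaussianPDF 0 s p.1 * gaussianPDF p.1 t p.2) := by
    unfold gaussianPDF gaussianPDFReal
    fun_prop
  rw [gaussianReal_of_var_ne_zero _ hs,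
    lintegral_withDensity_eq_lintegral_mul _ (measurable_gaussianPDF _ _)
      (by
        apply Measurable.lintegral_prod_right (f := fun x z => gaussianPDF x t z)
        unfold gaussianPDF gaussianPDFReal
        fun_prop)]
  simp only [Pi.mul_apply]
  have step : ∀ x : ℝ, gaussianPDF 0 s x * ∫⁻ z in A, gaussianPDF x t z
      = ∫⁻ z in A, gaussianPDF 0 s x * gaussianPDF x t z := by
    intro x
    rw [lintegral_const_mul _ (measurable_gaussianPDF _ _)]
  simp_rw [step]
  rw [lintegral_lintegral_swap (by exact hmeas_pair.aemeasurable)]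
  have inner : ∀ z : ℝ, (∫⁻ x, gaussianPDF 0 s x * gaussianPDF x t z)
      = gaussianPDF 0 (s + t) z := by
    intro z
    have hpt : ∀ x : ℝ, gaussianPDF 0 s x * gaussianPDF x t z
        = gaussianPDF 0 (s+t) z * gaussianPDF ((s:ℝ) * z / ((s:ℝ)+t)) (s * t / (s+t)) x := by
      intro x
      unfold gaussianPDF
      rw [← ENNReal.ofReal_mul (gaussianPDFReal_nonneg _ _ _),
        ← ENNReal.ofReal_mul (gaussianPDFReal_nonneg _ _ _), pdf_prod_identity hs' ht']
    simp_rw [hpt]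
    rw [lintegral_const_mul _ (measurable_gaussianPDF _ _), lintegral_gaussianPDF_eq_one _ hq,
      mul_one]
  simp_rw [inner]
  rw [gaussianReal_of_var_ne_zero _ hst, withDensity_apply _ hA]

lemma withDensity_prod {α β : Type*} [MeasurableSpace α] [MeasurableSpace β]
    (μ : Measure α) (ν : Measure β) [SigmaFinite μ] [SigmaFinite ν]
    (f : α → ℝ≥0∞) (g : β → ℝ≥0∞) (hf : Measurable f) (hg : Measurable g)
    [SigmaFinite (μ.withDensity f)] [SigmaFinite (ν.withDensity g)] :
    (μ.withDensity f).prod (ν.withDensity g) =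
      (μ.prod ν).withDensity (fun p => f p.1 * g p.2) := by
  apply Measure.prod_eq
  intro s t hs ht
  rw [withDensity_apply _ (hs.prod ht), ← Measure.prod_restrict,
    lintegral_prod_mul hf.aemeasurable hg.aemeasurable,
    withDensity_apply _ hs, withDensity_apply _ ht]


lemma map_withDensity_equiv {α β : Type*} [MeasurableSpace α] [MeasurableSpace β]
    (e : α ≃ᵐ β) (ρ : Measure α) (F : β → ℝ≥0∞) (hF : Measurable F) :
    (ρ.withDensity (F ∘ e)).map e = (ρ.map e).withDensity F := by
  ext s hs
  rw [Measure.map_apply e.measurable hs, withDensity_apply _ (e.measurable hs),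
    withDensity_apply _ hs, Measure.restrict_map e.measurable hs,
    lintegral_map hF e.measurable]
  rfl


lemma oneD_CM (b : ℝ) :
    (gaussianReal 0 1).map (· + b) =
      (gaussianReal 0 1).withDensity (fun x => ENNReal.ofReal (rexp (b * x - b ^ 2 / 2))) := by
  rw [gaussianReal_map_add_const, zero_add,
    gaussianReal_of_var_ne_zero _ one_ne_zero, gaussianReal_of_var_ne_zero _ one_ne_zero,
    ← withDensity_mul _ (measurable_gaussianPDF _ _) (by fun_prop)]
  congr 1 with x
  simp only [Pi.mul_apply, gaussianPDF]
  rw [← ENNReal.ofReal_mul (gaussianPDFReal_nonneg _ _ _)]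
  congr 1
  simp only [gaussianPDFReal, NNReal.coe_one, mul_one]
  rw [mul_assoc, ← Real.exp_add]
  congr 1
  ring

instance stdGaussPi_prob (n : ℕ) : IsProbabilityMeasure (stdGaussPi n) := by
  unfold stdGaussPi; infer_instance

lemma measurable_linsum {n : ℕ} (w : Fin n → ℝ) :
    Measurable (fun x : Fin n → ℝ => ∑ i, w i * x i) :=
  Finset.univ.measurable_sum fun i _ => by fun_prop

lemma stdGaussPi_succ (n : ℕ) :
    MeasurePreserving (MeasurableEquiv.piFinSuccAbove (fun _ : Fin (n+1) => ℝ) 0)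
      (stdGaussPi (n+1)) ((gaussianReal 0 1).prod (stdGaussPi n)) :=
  measurePreserving_piFinSuccAbove (fun _ : Fin (n+1) => gaussianReal 0 1) 0


/-- Cameron–Martin for the standard Gaussian on `ℝ^n`. -/
lemma pi_CM (n : ℕ) (w : Fin n → ℝ) :
    (stdGaussPi n).map (· + w) = (stdGaussPi n).withDensity
      (fun x => ENNReal.ofReal (rexp ((∑ i, w i * x i) - (∑ i, w i ^ 2) / 2))) := by
  induction n with
  | zero =>
    have h1 : (· + w) = (id : (Fin 0 → ℝ) → _) := by
      funext x; exact Subsingleton.elim _ _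
    rw [h1, Measure.map_id]
    have h2 : (fun x : Fin 0 → ℝ =>
        ENNReal.ofReal (rexp ((∑ i, w i * x i) - (∑ i, w i ^ 2) / 2))) = 1 := by
      funext x; simp
    rw [h2, withDensity_one]
  | succ n ih =>
    set e := MeasurableEquiv.piFinSuccAbove (fun _ : Fin (n+1) => ℝ) 0 with he
    set w' : Fin n → ℝ := fun j => w ((0 : Fin (n+1)).succAbove j) with hw'
    set f1 : ℝ → ℝ≥0∞ := fun y => ENNReal.ofReal (rexp (w 0 * y - w 0 ^ 2 / 2)) with hf1
    set f2 : (Fin n → ℝ) → ℝ≥0∞ :=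
      fun x => ENNReal.ofReal (rexp ((∑ i, w' i * x i) - (∑ i, w' i ^ 2) / 2)) with hf2
    have hf1m : Measurable f1 := by fun_prop
    have hf2m : Measurable f2 := by
      apply ENNReal.measurable_ofReal.comp
      exact (Real.continuous_exp.measurable).comp ((measurable_linsum w').sub measurable_const)
    haveI : IsProbabilityMeasure ((gaussianReal 0 1).withDensity f1) := by
      rw [← oneD_CM]; exact Measure.isProbabilityMeasure_map (by fun_prop)
    haveI : IsProbabilityMeasure ((stdGaussPi n).withDensity f2) := by
      rw [← ih]; exact Measure.isProbabilityMeasure_map ((measurable_id.add_const w').aemeasurable)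
    have hcomm : ∀ x : Fin (n+1) → ℝ,
        e (x + w) = (Prod.map (· + w 0) (· + w')) (e x) := fun x => rfl
    have hP : Measurable (Prod.map (fun x : ℝ => x + w 0) (fun x : Fin n → ℝ => x + w')) :=
      (measurable_id.add_const _).prodMap (measurable_id.add_const _)
    have hmapped : (((stdGaussPi (n+1)).map e).map (Prod.map (· + w 0) (· + w'))).map e.symm
        = (stdGaussPi (n+1)).map (· + w) := by
      rw [Measure.map_map e.symm.measurable hP,
        Measure.map_map (e.symm.measurable.comp hP) e.measurable]
      congr 1
      funext x
      show e.symm (Prod.map _ _ (e x)) = x + w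
      rw [← hcomm x, e.symm_apply_apply]
    rw [← hmapped, (stdGaussPi_succ n).map_eq]
    have hprodmap : ((gaussianReal 0 1).prod (stdGaussPi n)).map (Prod.map (· + w 0) (· + w'))
        = ((gaussianReal 0 1).map (· + w 0)).prod ((stdGaussPi n).map (· + w')) :=
      (Measure.map_prod_map _ _ (measurable_id.add_const _) (measurable_id.add_const _)).symm
    rw [hprodmap, oneD_CM, ih, withDensity_prod _ _ f1 f2 hf1m hf2m]
    have hmwd := map_withDensity_equiv e.symm ((gaussianReal 0 1).prod (stdGaussPi n))
      (fun x : Fin (n+1) → ℝ =>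
        ENNReal.ofReal (rexp ((∑ i, w i * x i) - (∑ i, w i ^ 2) / 2)))
      (by
        apply ENNReal.measurable_ofReal.comp
        exact (Real.continuous_exp.measurable).comp ((measurable_linsum w).sub measurable_const))
    have hback := ((stdGaussPi_succ n).symm e).map_eq
    rw [hback] at hmwd
    have hdens : (fun p : ℝ × (Fin n → ℝ) => f1 p.1 * f2 p.2)
        = ((fun x : Fin (n+1) → ℝ =>
            ENNReal.ofReal (rexp ((∑ i, w i * x i) - (∑ i, w i ^ 2) / 2))) ∘ ⇑e.symm) := by
      funext p
      simp only [Function.comp_apply, hf1, hf2]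
      rw [← ENNReal.ofReal_mul (Real.exp_nonneg _), ← Real.exp_add]
      congr 2
      have h0 : e.symm p 0 = p.1 := by
        simp [e, MeasurableEquiv.piFinSuccAbove]
      have hsucc : ∀ j : Fin n, e.symm p ((0 : Fin (n+1)).succAbove j) = p.2 j := by
        intro j
        simp [e, MeasurableEquiv.piFinSuccAbove]
      rw [Fin.sum_univ_succAbove (fun i => w i * e.symm p i) 0,
        Fin.sum_univ_succAbove (fun i => w i ^ 2) 0, h0]
      simp only [hsucc, w']
      ring
    rw [hdens]
    exact hmwd


/-- law of a linear functional of the standard Gaussian -/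
lemma pi_lin (n : ℕ) (w : Fin n → ℝ) (r : ℝ≥0) (hr : (r : ℝ) = ∑ i, w i ^ 2) :
    (stdGaussPi n).map (fun x => ∑ i, w i * x i) = gaussianReal 0 r := by
  induction n generalizing r with
  | zero =>
    have hr0 : r = 0 := by
      have : (r : ℝ) = 0 := by rw [hr]; simp
      exact_mod_cast this
    subst hr0
    rw [gaussianReal_zero_var]
    have h1 : (fun x : Fin 0 → ℝ => ∑ i, w i * x i) = fun _ => (0:ℝ) := by
      funext x; simp
    rw [h1, Measure.map_const, measure_univ, one_smul]
  | succ n ih =>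
    set e := MeasurableEquiv.piFinSuccAbove (fun _ : Fin (n+1) => ℝ) 0 with he
    set w' : Fin n → ℝ := fun j => w ((0 : Fin (n+1)).succAbove j) with hw'
    set a : ℝ≥0 := ⟨w 0 ^ 2, sq_nonneg _⟩ with ha
    set b : ℝ≥0 := ⟨∑ j, w' j ^ 2, by positivity⟩ with hb
    have hrab : r = a + b := by
      apply NNReal.coe_injective
      push_cast
      rw [hr, Fin.sum_univ_succAbove (fun i => w i ^ 2) 0]
      rfl
    have hfun : (fun x : Fin (n+1) → ℝ => ∑ i, w i * x i)
        = (fun p : ℝ × ℝ => p.1 + p.2) ∘ (Prod.map (fun y => w 0 * y)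
            (fun x : Fin n → ℝ => ∑ j, w' j * x j)) ∘ ⇑e := by
      funext x
      simp only [Function.comp_apply]
      rw [Fin.sum_univ_succAbove (fun i => w i * x i) 0]
      rfl
    have hPm : Measurable (Prod.map (fun y : ℝ => w 0 * y)
        (fun x : Fin n → ℝ => ∑ j, w' j * x j)) :=
      (measurable_const_mul _).prodMap (measurable_linsum w')
    rw [hfun, ← Measure.map_map (by fun_prop) (hPm.comp e.measurable),
      ← Measure.map_map hPm e.measurable, (stdGaussPi_succ n).map_eq,
      ← Measure.map_prod_map _ _ (measurable_const_mul _) (measurable_linsum w'),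
      ih w' b rfl]
    have hmul : (gaussianReal 0 1).map (fun y : ℝ => w 0 * y) = gaussianReal 0 a := by
      have := gaussianReal_map_const_mul (μ := 0) (v := 1) (w 0)
      rw [mul_zero] at this
      convert this using 2
      apply NNReal.coe_injective
      simp [ha]
      rfl
    rw [hmul, gauss_conv, hrab]

lemma xexp_integral (t₀ : ℝ) (ht : 0 < t₀) :
    IntegrableOn (fun x => x * rexp (-x^2/2)) (Ioi t₀) ∧
      ∫ x in Ioi t₀, x * rexp (-x^2/2) = rexp (-t₀^2/2) := by
  have hderiv : ∀ x ∈ Ici t₀, HasDerivAt (fun y => -rexp (-y^2/2)) (x * rexp (-x^2/2)) x := by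
    intro x _
    have h1 : HasDerivAt (fun y : ℝ => -y^2/2) (-x) x := by
      have := ((hasDerivAt_pow 2 x).neg).div_const 2
      simpa using this.congr_deriv (by ring)
    have h2 := (h1.exp).neg
    exact h2.congr_deriv (by ring)
  have htend : Filter.Tendsto (fun y => -rexp (-y^2/2)) Filter.atTop (nhds 0) := by
    rw [← neg_zero]
    apply Filter.Tendsto.neg
    have h3 : Filter.Tendsto (fun y : ℝ => (-1/2) * y^2) Filter.atTop Filter.atBot :=
      Filter.Tendsto.const_mul_atTop_of_neg (by norm_num) (Filter.tendsto_pow_atTop two_ne_zero)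
    exact (Real.tendsto_exp_atBot.comp h3).congr (fun x => by rw [Function.comp_apply]; ring_nf)
  constructor
  · apply integrableOn_Ioi_deriv_of_nonneg' hderiv
    · intro x hx
      have : 0 < x := lt_trans ht hx
      positivity
    · exact htend
  · have := integral_Ioi_of_hasDerivAt_of_tendsto' hderiv
      (integrableOn_Ioi_deriv_of_nonneg' hderiv
        (fun x hx => by have : 0 < x := lt_trans ht hx; positivity) htend) htend
    simpa using this


lemma gauss_tail (t₀ : ℝ) (ht : 0 < t₀) :
    (gaussianReal 0 1) (Ici t₀) ≤ ENNReal.ofReal ((Real.sqrt (2*π))⁻¹ * rexp (-t₀^2/2) / t₀) := by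
  rw [gaussianReal_apply_eq_integral 0 one_ne_zero]
  apply ENNReal.ofReal_le_ofReal
  rw [integral_Ici_eq_integral_Ioi]
  have hpdf : ∀ x : ℝ, gaussianPDFReal 0 1 x = (Real.sqrt (2*π))⁻¹ * rexp (-x^2/2) := by
    intro x
    simp [gaussianPDFReal]
  calc ∫ x in Ioi t₀, gaussianPDFReal 0 1 x
      = ∫ x in Ioi t₀, (Real.sqrt (2*π))⁻¹ * rexp (-x^2/2) := by
        apply setIntegral_congr_fun measurableSet_Ioi
        intro x _
        exact hpdf x
    _ ≤ ∫ x in Ioi t₀, (Real.sqrt (2*π))⁻¹ * (t₀⁻¹ * (x * rexp (-x^2/2))) := by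
        apply setIntegral_mono_on
        · have : Integrable (fun x => (Real.sqrt (2*π))⁻¹ * rexp (-x^2/2)) :=
            (integrable_gaussianPDFReal 0 1).congr (by filter_upwards with x using hpdf x)
          exact this.integrableOn
        · exact (((xexp_integral t₀ ht).1.const_mul t₀⁻¹).const_mul _)
        · exact measurableSet_Ioi
        · intro x hx
          have hx' : t₀ < x := hx
          have h1 : (1:ℝ) ≤ t₀⁻¹ * x := by
            rw [inv_mul_eq_div, le_div_iff₀ ht]
            linarith
          have h2 : (0:ℝ) < rexp (-x^2/2) := Real.exp_pos _
          have h3 : (0:ℝ) ≤ (Real.sqrt (2*π))⁻¹ := by positivity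
          have h4 : rexp (-x^2/2) ≤ t₀⁻¹ * (x * rexp (-x^2/2)) := by
            nlinarith [mul_le_mul_of_nonneg_right h1 h2.le]
          exact mul_le_mul_of_nonneg_left h4 h3
    _ = (Real.sqrt (2*π))⁻¹ * rexp (-t₀^2/2) / t₀ := by
        rw [integral_const_mul, integral_const_mul, (xexp_integral t₀ ht).2]
        field_simp


lemma numeric_bound (ε c δ : ℝ) (hε0 : 0 < ε) (hε1 : ε ≤ 1) (hc : 3/2 ≤ c)
    (hδ : δ = 1.25 * rexp (-c^2/2)) :
    (Real.sqrt (2*π))⁻¹ * rexp (-(c - ε/(2*c))^2/2) / (c - ε/(2*c)) ≤ δ := by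
  have hcpos : 0 < c := by linarith
  have ht76 : 7/6 ≤ c - ε/(2*c) := by
    have : ε/(2*c) ≤ 1/3 := by
      rw [div_le_div_iff₀ (by linarith) (by norm_num)]
      linarith
    linarith
  have ht0 : 0 < c - ε/(2*c) := by linarith
  have hsq : c^2 - 1 ≤ (c - ε/(2*c))^2 := by
    have hexpand : (c - ε/(2*c))^2 = c^2 - ε + ε^2/(4*c^2) := by
      field_simp
      ring
    rw [hexpand]
    have h1 : 0 ≤ ε^2/(4*c^2) := by positivity
    linarith
  have hexp1 : rexp (-(c - ε/(2*c))^2/2) ≤ rexp (1/2) * rexp (-c^2/2) := by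
    rw [← Real.exp_add]
    apply Real.exp_le_exp.mpr
    linarith
  have hsqrt : (5:ℝ)/2 ≤ Real.sqrt (2*π) := by
    rw [show (5:ℝ)/2 = Real.sqrt ((5/2)^2) by rw [Real.sqrt_sq]; norm_num]
    apply Real.sqrt_le_sqrt
    nlinarith [Real.pi_gt_d6]
  have hehalf : rexp (1/2) ≤ 1.65 := by
    nlinarith [Real.exp_one_lt_d9, Real.exp_pos (1/2:ℝ),
      Real.exp_add (1/2 : ℝ) (1/2), sq_nonneg (rexp (1/2) - 1.65)]
  have hexppos : (0:ℝ) < rexp (-c^2/2) := Real.exp_pos _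
  have hsp : (0:ℝ) < Real.sqrt (2*π) := by linarith
  have hts : (35:ℝ)/12 ≤ (c - ε/(2*c)) * Real.sqrt (2*π) := by
    calc (35:ℝ)/12 = (7/6) * (5/2) := by norm_num
      _ ≤ (c - ε/(2*c)) * Real.sqrt (2*π) :=
          mul_le_mul ht76 hsqrt (by norm_num) (by linarith)
  rw [hδ, div_le_iff₀ ht0, inv_mul_le_iff₀ hsp]
  calc rexp (-(c - ε/(2*c))^2/2) ≤ rexp (1/2) * rexp (-c^2/2) := hexp1
    _ ≤ 1.65 * rexp (-c^2/2) := by nlinarith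
    _ ≤ 1.25 * rexp (-c^2/2) * ((c - ε/(2*c)) * Real.sqrt (2*π)) := by
        nlinarith [mul_le_mul_of_nonneg_left hts
          (show (0:ℝ) ≤ 1.25 * rexp (-c^2/2) by positivity)]
    _ = Real.sqrt (2*π) * (1.25 * rexp (-c^2/2) * (c - ε/(2*c))) := by ring

/-- the key 1-D tail estimate -/
lemma bad_prob (ε c δ : ℝ) (hε0 : 0 < ε) (hε1 : ε ≤ 1) (hc32 : 3/2 ≤ c)
    (hδeq : δ = 1.25 * rexp (-c^2/2)) (r2 : ℝ≥0) (hr2 : (r2:ℝ) ≤ (ε/c)^2) :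
    gaussianReal 0 r2 (Iio ((r2:ℝ)/2 - ε)) ≤ ENNReal.ofReal δ := by
  have hcpos : (0:ℝ) < c := by linarith
  have ht76 : (7:ℝ)/6 ≤ c - ε/(2*c) := by
    have : ε/(2*c) ≤ 1/3 := by
      rw [div_le_div_iff₀ (by linarith) (by norm_num)]
      linarith
    linarith
  have ht0 : (0:ℝ) < c - ε/(2*c) := by linarith
  by_cases hr0 : r2 = 0
  · subst hr0
    rw [gaussianReal_zero_var]
    rw [Measure.dirac_apply' _ measurableSet_Iio,
      Set.indicator_of_notMem (by simp only [mem_Iio, NNReal.coe_zero]; push_cast; linarith)]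
    exact zero_le
  · have hr2pos : (0:ℝ) < r2 := lt_of_le_of_ne r2.coe_nonneg (by exact_mod_cast Ne.symm hr0)
    set r : ℝ := Real.sqrt r2 with hrdef
    have hrpos : 0 < r := Real.sqrt_pos.mpr hr2pos
    have hrsq : r^2 = (r2:ℝ) := Real.sq_sqrt r2.coe_nonneg
    have hrle : r ≤ ε/c := by
      rw [hrdef, show (ε/c) = Real.sqrt ((ε/c)^2) from (Real.sqrt_sq (by positivity)).symm]
      exact Real.sqrt_le_sqrt hr2
    have hmap : (gaussianReal 0 1).map (fun y : ℝ => r * y) = gaussianReal 0 r2 := by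
      have := gaussianReal_map_const_mul (μ := 0) (v := 1) r
      rw [mul_zero, mul_one] at this
      convert this using 2
      apply NNReal.coe_injective
      simp [hrsq.symm]
    rw [← hmap, Measure.map_apply (by fun_prop) measurableSet_Iio]
    have hset : ((fun y : ℝ => r * y) ⁻¹' Iio ((r2:ℝ)/2 - ε)) = Iio (((r2:ℝ)/2 - ε)/r) := by
      ext y
      simp only [mem_preimage, mem_Iio]
      rw [← lt_div_iff₀' hrpos]
    rw [hset]
    -- use symmetry x ↦ -x
    have hsymm : (gaussianReal 0 1).map (fun y : ℝ => (-1) * y) = gaussianReal 0 1 := by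
      have := gaussianReal_map_const_mul (μ := 0) (v := 1) (-1)
      rw [mul_zero] at this
      convert this using 2
      apply NNReal.coe_injective
      norm_num
    conv_lhs => rw [← hsymm]
    rw [Measure.map_apply (by fun_prop) measurableSet_Iio]
    have hset2 : ((fun y : ℝ => (-1) * y) ⁻¹' Iio (((r2:ℝ)/2 - ε)/r)) =
        Ioi (-(((r2:ℝ)/2 - ε)/r)) := by
      ext y
      simp only [mem_preimage, mem_Iio, mem_Ioi]
      constructor <;> intro h <;> linarith
    rw [hset2]
    have hsub : Ioi (-(((r2:ℝ)/2 - ε)/r)) ⊆ Ici (c - ε/(2*c)) := by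
      intro y hy
      have h1 : -(((r2:ℝ)/2 - ε)/r) = ε/r - r/2 := by
        rw [← hrsq]
        field_simp
        ring
      have h2 : c ≤ ε/r := by
        rw [le_div_iff₀ hrpos]
        calc c * r ≤ c * (ε/c) := by
              apply mul_le_mul_of_nonneg_left hrle (by linarith)
          _ = ε := by field_simp
      have h3 : r/2 ≤ ε/(2*c) := by
        rw [div_le_div_iff₀ (by norm_num) (by linarith)]
        calc r * (2*c) = (c * r) * 2 := by ring
          _ ≤ (c * (ε/c)) * 2 := by
              apply mul_le_mul_of_nonneg_right
                (mul_le_mul_of_nonneg_left hrle (by linarith)) (by norm_num)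
          _ = ε * 2 := by field_simp
      have : c - ε/(2*c) ≤ ε/r - r/2 := by linarith
      rw [h1] at hy
      exact le_trans this hy.le
    calc (gaussianReal 0 1) (Ioi (-(((r2:ℝ)/2 - ε)/r)))
        ≤ (gaussianReal 0 1) (Ici (c - ε/(2*c))) := measure_mono hsub
      _ ≤ ENNReal.ofReal ((Real.sqrt (2*π))⁻¹ * rexp (-(c - ε/(2*c))^2/2) / (c - ε/(2*c))) :=
          gauss_tail _ ht0
      _ ≤ ENNReal.ofReal δ := ENNReal.ofReal_le_ofReal
          (numeric_bound ε c δ hε0 hε1 hc32 hδeq)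


/-- core privacy inequality on the product space -/
lemma core (m : ℕ) (ε δ c : ℝ) (hε0 : 0 < ε) (hε1 : ε ≤ 1) (hc32 : 3/2 ≤ c)
    (hδeq : δ = 1.25 * rexp (-c^2/2))
    (wG : Fin m → ℝ) (wg : ℝ) (hw : (∑ i, wG i ^ 2) + wg^2 ≤ (ε/c)^2)
    (T : Set ((Fin m → ℝ) × ℝ)) (hT : MeasurableSet T) :
    ((stdGaussPi m).prod (gaussianReal 0 1)) T
      ≤ ENNReal.ofReal (rexp ε) *
          ((stdGaussPi m).prod (gaussianReal 0 1)) ((fun p => (p.1 + wG, p.2 + wg)) ⁻¹' T)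
        + ENNReal.ofReal δ := by
  have hcpos : (0:ℝ) < c := by linarith
  set Pm := (stdGaussPi m).prod (gaussianReal 0 1) with hPm
  set r2 : ℝ := (∑ i, wG i ^ 2) + wg^2 with hr2def
  have hr2nn : 0 ≤ r2 := by positivity
  set ℓ : (Fin m → ℝ) × ℝ → ℝ := fun p => (∑ i, wG i * p.1 i) + wg * p.2 with hℓ
  have hℓm : Measurable ℓ := by
    apply Measurable.add
    · exact (measurable_linsum wG).comp measurable_fst
    · exact measurable_snd.const_mul wg
  set D : (Fin m → ℝ) × ℝ → ℝ≥0∞ := fun p => ENNReal.ofReal (rexp (ℓ p - r2/2)) with hD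
  have hDm : Measurable D := by
    apply ENNReal.measurable_ofReal.comp
    exact Real.continuous_exp.measurable.comp (hℓm.sub measurable_const)
  set shift : (Fin m → ℝ) × ℝ → (Fin m → ℝ) × ℝ := fun p => (p.1 + wG, p.2 + wg) with hshift
  have hshiftm : Measurable shift :=
    ((measurable_fst.add_const _).prodMk (measurable_snd.add_const _))
  -- Cameron–Martin on the product space
  have hCM : Pm.map shift = Pm.withDensity D := by
    have h1 : Pm.map shift = ((stdGaussPi m).map (· + wG)).prod ((gaussianReal 0 1).map (· + wg)) :=
      (Measure.map_prod_map _ _ (measurable_id.add_const _) (measurable_id.add_const _)).symm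
    set f : (Fin m → ℝ) → ℝ≥0∞ :=
      fun x => ENNReal.ofReal (rexp ((∑ i, wG i * x i) - (∑ i, wG i ^ 2) / 2)) with hf
    set g : ℝ → ℝ≥0∞ := fun y => ENNReal.ofReal (rexp (wg * y - wg ^ 2 / 2)) with hg
    have hfm : Measurable f := by
      apply ENNReal.measurable_ofReal.comp
      exact Real.continuous_exp.measurable.comp ((measurable_linsum wG).sub measurable_const)
    have hgm : Measurable g := by fun_prop
    haveI : IsProbabilityMeasure ((stdGaussPi m).withDensity f) := by
      rw [← pi_CM]; exact Measure.isProbabilityMeasure_map ((measurable_id.add_const wG).aemeasurable)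
    haveI : IsProbabilityMeasure ((gaussianReal 0 1).withDensity g) := by
      rw [← oneD_CM]; exact Measure.isProbabilityMeasure_map (by fun_prop)
    rw [h1, pi_CM, oneD_CM, withDensity_prod _ _ f g hfm hgm]
    congr 1
    funext p
    rw [hD]
    simp only [hf, hg]
    rw [← ENNReal.ofReal_mul (Real.exp_nonneg _), ← Real.exp_add]
    congr 2
    simp only [hℓ, hr2def]
    ring
  -- law of the linear functional
  set r2' : ℝ≥0 := ⟨r2, hr2nn⟩ with hr2'
  have hlaw : Pm.map ℓ = gaussianReal 0 r2' := by
    have hfun : ℓ = (fun q : ℝ × ℝ => q.1 + q.2) ∘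
        (Prod.map (fun x : Fin m → ℝ => ∑ i, wG i * x i) (fun y : ℝ => wg * y)) := rfl
    rw [hfun, ← Measure.map_map (by fun_prop)
      ((measurable_linsum wG).prodMap (measurable_const_mul wg)),
      ← Measure.map_prod_map _ _ (measurable_linsum wG) (measurable_const_mul wg),
      pi_lin m wG (NNReal.mk (∑ i, wG i ^ 2) (by positivity)) rfl]
    have hmul : (gaussianReal 0 1).map (fun y : ℝ => wg * y)
        = gaussianReal 0 (NNReal.mk (wg^2) (sq_nonneg _)) := by
      have := gaussianReal_map_const_mul (μ := 0) (v := 1) wg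
      rw [mul_zero] at this
      convert this using 2
      apply NNReal.coe_injective
      simp
    rw [hmul, gauss_conv]
    congr 1
  -- split into good and bad
  set G : Set ((Fin m → ℝ) × ℝ) := {p | r2/2 - ε ≤ ℓ p} with hG
  have hGm : MeasurableSet G := measurableSet_le measurable_const hℓm
  have hsplit : Pm T ≤ Pm (T ∩ G) + Pm (T ∩ Gᶜ) := by
    calc Pm T = Pm ((T ∩ G) ∪ (T ∩ Gᶜ)) := by rw [Set.inter_union_compl]
      _ ≤ Pm (T ∩ G) + Pm (T ∩ Gᶜ) := measure_union_le _ _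
  -- good part
  have hgood : Pm (T ∩ G) ≤ ENNReal.ofReal (rexp ε) * Pm (shift ⁻¹' T) := by
    have h1 : Pm (T ∩ G) ≤ ∫⁻ p in T ∩ G, ENNReal.ofReal (rexp ε) * D p ∂Pm := by
      have : Pm (T ∩ G) = ∫⁻ _ in T ∩ G, 1 ∂Pm := (setLIntegral_one _).symm
      rw [this]
      apply setLIntegral_mono (by fun_prop)
      intro p hp
      have hpG : r2/2 - ε ≤ ℓ p := hp.2
      rw [hD, ← ENNReal.ofReal_mul (Real.exp_nonneg _), ← Real.exp_add]
      rw [show (1:ℝ≥0∞) = ENNReal.ofReal 1 by simp]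
      apply ENNReal.ofReal_le_ofReal
      rw [← Real.exp_zero]
      apply Real.exp_le_exp.mpr
      linarith
    calc Pm (T ∩ G) ≤ ∫⁻ p in T ∩ G, ENNReal.ofReal (rexp ε) * D p ∂Pm := h1
      _ = ENNReal.ofReal (rexp ε) * ∫⁻ p in T ∩ G, D p ∂Pm := lintegral_const_mul _ hDm
      _ ≤ ENNReal.ofReal (rexp ε) * ∫⁻ p in T, D p ∂Pm := by
          apply mul_le_mul_right
          exact lintegral_mono_set Set.inter_subset_left
      _ = ENNReal.ofReal (rexp ε) * (Pm.withDensity D) T := by rw [withDensity_apply _ hT]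
      _ = ENNReal.ofReal (rexp ε) * Pm (shift ⁻¹' T) := by
          rw [← hCM, Measure.map_apply hshiftm hT]
  -- bad part
  have hbad : Pm (T ∩ Gᶜ) ≤ ENNReal.ofReal δ := by
    have hsub : T ∩ Gᶜ ⊆ ℓ ⁻¹' (Iio (r2/2 - ε)) := by
      intro p hp
      have : ¬ (r2/2 - ε ≤ ℓ p) := hp.2
      simp only [mem_preimage, mem_Iio]
      linarith
    calc Pm (T ∩ Gᶜ) ≤ Pm (ℓ ⁻¹' (Iio (r2/2 - ε))) := measure_mono hsub
      _ = (Pm.map ℓ) (Iio (r2/2 - ε)) := (Measure.map_apply hℓm measurableSet_Iio).symm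
      _ = gaussianReal 0 r2' (Iio ((r2':ℝ)/2 - ε)) := by rw [hlaw]; rfl
      _ ≤ ENNReal.ofReal δ := bad_prob ε c δ hε0 hε1 hc32 hδeq r2' hw
  calc Pm T ≤ Pm (T ∩ G) + Pm (T ∩ Gᶜ) := hsplit
    _ ≤ ENNReal.ofReal (rexp ε) * Pm (shift ⁻¹' T) + ENNReal.ofReal δ := add_le_add hgood hbad

lemma matrix_shift (m : ℕ) (ε c σsq : ℝ) (hε : 0 < ε) (hc : 0 < c) (hσ : 0 < σsq)
    (v : Fin m → ℝ) (hv : ∑ k, v k ^ 2 = 1)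
    (μi μj : Fin m → ℝ) (Sig0 A : Matrix (Fin m) (Fin m) ℝ)
    (hpos : Sig0.PosDef) (hA : A * Aᵀ = Sig0)
    (hdir : μi - μj = (dotProduct (μi - μj) v) • v)
    (hpd : (Sig0 + (σsq - (dotProduct (μi - μj) v * c / ε) ^ 2) •
      Matrix.vecMulVec v v).PosDef) :
    ∃ (wG : Fin m → ℝ) (wg : ℝ),
      (∑ i, wG i ^ 2) + wg ^ 2 ≤ (ε/c)^2 ∧
      A.mulVec wG + (Real.sqrt σsq * wg) • v = μj - μi := by
  set α := dotProduct (μi - μj) v with hα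
  set k := α * c / ε with hk
  set V := Matrix.vecMulVec v v with hV
  have hVmul : ∀ u : Fin m → ℝ, V.mulVec u = (v ⬝ᵥ u) • v := by
    intro u
    funext i
    simp only [hV, Matrix.mulVec, Matrix.vecMulVec_apply, dotProduct, Pi.smul_apply,
      smul_eq_mul, Finset.sum_mul]
    apply Finset.sum_congr rfl
    intros j _
    ring
  have hVh : V.IsHermitian := by
    ext i j
    simp [hV, Matrix.conjTranspose_apply, Matrix.vecMulVec_apply, mul_comm]
  have hVpsd : ∀ t : ℝ, 0 ≤ t → (t • V).PosSemidef := by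
    intro t ht
    refine Matrix.PosSemidef.of_dotProduct_mulVec_nonneg ?_ ?_
    · ext i j
      simp [hV, Matrix.conjTranspose_apply, Matrix.vecMulVec_apply, mul_comm]
    · intro x
      rw [star_trivial, Matrix.smul_mulVec, hVmul x]
      rw [dotProduct_smul, dotProduct_smul, smul_eq_mul, smul_eq_mul, dotProduct_comm x v]
      exact mul_nonneg ht (mul_self_nonneg _)
  set Sg := Sig0 + σsq • V with hSg
  have hSgPD : Sg.PosDef := hpos.add_posSemidef (hVpsd σsq hσ.le)
  have hdet : IsUnit Sg.det := isUnit_iff_ne_zero.mpr hSgPD.det_pos.ne'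
  set u := Sg⁻¹.mulVec v with hu_def
  have hu : Sg.mulVec u = v := by
    rw [hu_def, Matrix.mulVec_mulVec, Matrix.mul_nonsing_inv _ hdet, Matrix.one_mulVec]
  have hvne : v ≠ 0 := by
    intro h
    rw [h] at hv
    simp at hv
  have hune : u ≠ 0 := by
    intro h
    apply hvne
    rw [← hu, h, Matrix.mulVec_zero]
  set q := v ⬝ᵥ u with hq
  have hq1 : u ⬝ᵥ Sg.mulVec u = q := by rw [hu, dotProduct_comm]
  have hqpos : 0 < q := by
    have := hSgPD.dotProduct_mulVec_pos hune
    rwa [star_trivial, hq1] at this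
  have hpd' : (Sig0 + (σsq - k^2) • V) = Sg + (-(k^2)) • V := by
    rw [hSg]
    module
  have hquad : 0 < q - k^2 * (q * q) := by
    have h0 := hpd.dotProduct_mulVec_pos hune
    rw [star_trivial, hpd', Matrix.add_mulVec, dotProduct_add, Matrix.smul_mulVec,
      dotProduct_smul, hVmul u, hq1, dotProduct_smul] at h0
    rw [smul_eq_mul, smul_eq_mul, dotProduct_comm u v] at h0
    linarith
  have hk2q : k^2 * q < 1 := by nlinarith
  refine ⟨(-α) • (Aᵀ.mulVec u), -α * Real.sqrt σsq * q, ?_, ?_⟩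
  · -- norm bound
    have hsum : ∑ i, ((-α) • (Aᵀ.mulVec u)) i ^ 2 = α^2 * (u ⬝ᵥ Sig0.mulVec u) := by
      have hd : ∀ i, ((-α) • (Aᵀ.mulVec u)) i ^ 2 = α^2 * ((Aᵀ.mulVec u) i * (Aᵀ.mulVec u) i) := by
        intro i
        simp only [Pi.smul_apply, smul_eq_mul]
        ring
      simp_rw [hd, ← Finset.mul_sum]
      congr 1
      have : ∑ i, (Aᵀ.mulVec u) i * (Aᵀ.mulVec u) i = (Aᵀ.mulVec u) ⬝ᵥ (Aᵀ.mulVec u) := rfl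
      rw [this, dotProduct_mulVec, Matrix.mulVec_transpose, Matrix.vecMul_vecMul,
        hA, ← dotProduct_mulVec]
    have hwg2 : (-α * Real.sqrt σsq * q)^2 = α^2 * (σsq * (q * q)) := by
      have : Real.sqrt σsq ^ 2 = σsq := Real.sq_sqrt hσ.le
      nlinarith [this]
    have htot : u ⬝ᵥ Sig0.mulVec u + σsq * (q * q) = q := by
      have : u ⬝ᵥ Sg.mulVec u = u ⬝ᵥ Sig0.mulVec u + σsq * (q * q) := by
        rw [hSg, Matrix.add_mulVec, dotProduct_add, Matrix.smul_mulVec, dotProduct_smul,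
          hVmul u, dotProduct_smul]
        rw [smul_eq_mul, smul_eq_mul, dotProduct_comm u v]
      rw [← this, hq1]
    have hαk : α^2 = (ε/c)^2 * k^2 := by
      rw [hk]
      field_simp
    calc (∑ i, ((-α) • (Aᵀ.mulVec u)) i ^ 2) + (-α * Real.sqrt σsq * q)^2
        = α^2 * q := by rw [hsum, hwg2, ← mul_add, htot]
      _ = (ε/c)^2 * (k^2 * q) := by rw [hαk]; ring
      _ ≤ (ε/c)^2 * 1 := by
          apply mul_le_mul_of_nonneg_left hk2q.le (by positivity)
      _ = (ε/c)^2 := mul_one _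
  · -- shift identity
    have h1 : A.mulVec ((-α) • (Aᵀ.mulVec u)) = (-α) • (Sig0.mulVec u) := by
      rw [Matrix.mulVec_smul, Matrix.mulVec_mulVec, hA]
    have h2 : (Real.sqrt σsq * (-α * Real.sqrt σsq * q)) • v = (-α) • ((σsq * q) • v) := by
      rw [smul_smul]
      congr 1
      have h5 : Real.sqrt σsq * Real.sqrt σsq = σsq := Real.mul_self_sqrt hσ.le
      linear_combination (-α * q) * h5
    rw [h1, h2, ← smul_add]
    have h3 : Sg.mulVec u = Sig0.mulVec u + (σsq * q) • v := by
      rw [hSg, Matrix.add_mulVec, Matrix.smul_mulVec, hVmul u, smul_smul]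
    rw [← h3, hu, (neg_sub μi μj).symm, hdir]
    module

end DPaux

open DPaux Real Set Matrix in
/-- **Directional Gaussian mechanism with adversarial uncertainty, DauM**
(Theorem A.4): for pairs `(N(μᵢ, Σ₀), N(μⱼ, Σ₀))` with common positive definite
covariance `Σ₀` and `μᵢ − μⱼ = α v` parallel to the unit vector `v`
(`α = (μᵢ − μⱼ)ᵀ v`), if `σ² > 0` is such that `Σ₀ + (σ² − (αc/ε)²)·v vᵀ` is positive
definite for every pair, where `c = √(2 ln(1.25/δ))`, then adding noise `σ·G·v` with
`G` standard Gaussian (i.e. `N(0, σ² v vᵀ)`) gives `(ε, δ)`-distribution privacy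
w.r.t. `Ψ`. -/
theorem directional_gaussian_adversarial_uncertainty
    (m : ℕ) (hm : 1 ≤ m)
    (ε δ c : ℝ) (hε : 0 < ε ∧ ε ≤ 1) (hδ : 0 < δ ∧ δ < 1)
    (hc : c = Real.sqrt (2 * Real.log (1.25 / δ))) (hc32 : 3 / 2 ≤ c)
    (v : Fin m → ℝ) (hv : l2norm v = 1)
    (σsq : ℝ) (hσsq : 0 < σsq)
    (Ψ : Set (Measure (Fin m → ℝ) × Measure (Fin m → ℝ)))
    (hΨ : ∀ p ∈ Ψ, ∃ (μi μj : Fin m → ℝ) (Sig0 A : Matrix (Fin m) (Fin m) ℝ),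
      Sig0.PosDef ∧ A * A.transpose = Sig0 ∧
      μi - μj = (dotProduct (μi - μj) v) • v ∧
      (Sig0 + (σsq - (dotProduct (μi - μj) v * c / ε) ^ 2) •
        Matrix.vecMulVec v v).PosDef ∧
      p.1 = gaussN μi A ∧ p.2 = gaussN μj A) :
    ∀ p ∈ Ψ, ∀ S : Set (Fin m → ℝ), MeasurableSet S →
      mconv p.1 ((gaussianReal 0 1).map (fun g => (Real.sqrt σsq * g) • v)) S
        ≤ ENNReal.ofReal (Real.exp ε)
            * mconv p.2 ((gaussianReal 0 1).map (fun g => (Real.sqrt σsq * g) • v)) S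
          + ENNReal.ofReal δ := by
  obtain ⟨hε0, hε1⟩ := hε
  obtain ⟨hδ0, hδ1⟩ := hδ
  intro p hp S hS
  obtain ⟨μi, μj, Sig0, A, hpos, hA, hdir, hpd, hp1, hp2⟩ := hΨ p hp
  have hc0 : (0:ℝ) < c := by linarith
  have hδeq : δ = 1.25 * Real.exp (-c^2/2) := by
    have h125 : (0:ℝ) < 1.25 / δ := by positivity
    have hlog : 0 ≤ 2 * Real.log (1.25/δ) := by
      have h1 : (1:ℝ) ≤ 1.25/δ := by
        rw [le_div_iff₀ hδ0]; linarith
      have := Real.log_nonneg h1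
      linarith
    have hc2 : c^2 = 2 * Real.log (1.25/δ) := by rw [hc, Real.sq_sqrt hlog]
    have hexp : Real.exp (-c^2/2) = δ / 1.25 := by
      rw [hc2, show -(2 * Real.log (1.25/δ))/2 = -Real.log (1.25/δ) by ring,
        Real.exp_neg, Real.exp_log h125, inv_div]
    rw [hexp]
    field_simp
  have hvsum : ∑ k, v k ^ 2 = 1 := by
    have h2 : Real.sqrt (∑ k, v k ^ 2) = 1 := hv
    nlinarith [Real.sq_sqrt (show (0:ℝ) ≤ ∑ k, v k ^ 2 by positivity)]
  obtain ⟨wG, wg, hwnorm, hwshift⟩ :=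
    matrix_shift m ε c σsq hε0 hc0 hσsq v hvsum μi μj Sig0 A hpos hA hdir hpd
  set σ := Real.sqrt σsq with hσdef
  have hmulVec : Measurable (fun g : Fin m → ℝ => A.mulVec g) :=
    measurable_pi_lambda _ (fun i => by
      simp only [Matrix.mulVec, dotProduct]; fun_prop)
  have hf2 : Measurable (fun g : ℝ => (σ * g) • v) := by
    apply measurable_pi_lambda
    intro i
    exact (measurable_id.const_mul σ).mul_const (v i)
  have hFim : Measurable (fun q : (Fin m → ℝ) × ℝ => μi + A.mulVec q.1 + (σ * q.2) • v) := by
    apply Measurable.add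
    · exact measurable_const.add (hmulVec.comp measurable_fst)
    · exact hf2.comp measurable_snd
  have key : ∀ (μ0 : Fin m → ℝ),
      mconv (gaussN μ0 A) ((gaussianReal 0 1).map (fun g => (σ * g) • v)) S
        = ((stdGaussPi m).prod (gaussianReal 0 1))
            ((fun q : (Fin m → ℝ) × ℝ => μ0 + A.mulVec q.1 + (σ * q.2) • v) ⁻¹' S) := by
    intro μ0
    unfold mconv gaussN
    rw [Measure.map_prod_map (f := fun g : Fin m → ℝ => μ0 + A.mulVec g) _ _
        (measurable_const.add hmulVec : Measurable (fun g : Fin m → ℝ => μ0 + A.mulVec g)) hf2,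
      Measure.map_map (f := Prod.map (fun g : Fin m → ℝ => μ0 + A.mulVec g)
          (fun g : ℝ => (σ * g) • v)) (g := fun p : (Fin m → ℝ) × (Fin m → ℝ) => p.1 + p.2)
        (measurable_fst.add measurable_snd)
        ((measurable_const.add hmulVec :
          Measurable (fun g : Fin m → ℝ => μ0 + A.mulVec g)).prodMap hf2),
      Measure.map_apply (by
        apply Measurable.add
        · exact measurable_const.add (hmulVec.comp measurable_fst)
        · exact hf2.comp measurable_snd) hS]
    rfl
  rw [hp1, hp2, key μi, key μj]
  have hshiftpre : ((fun q : (Fin m → ℝ) × ℝ => μj + A.mulVec q.1 + (σ * q.2) • v) ⁻¹' S)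
      = (fun p : (Fin m → ℝ) × ℝ => (p.1 + wG, p.2 + wg)) ⁻¹'
        ((fun q : (Fin m → ℝ) × ℝ => μi + A.mulVec q.1 + (σ * q.2) • v) ⁻¹' S) := by
    ext q
    simp only [Set.mem_preimage]
    have harr : μi + A.mulVec (q.1 + wG) + (σ * (q.2 + wg)) • v
        = μj + A.mulVec q.1 + (σ * q.2) • v := by
      rw [Matrix.mulVec_add, mul_add, add_smul]
      have hre : μi + (A.mulVec q.1 + A.mulVec wG) + ((σ * q.2) • v + (σ * wg) • v)
          = μi + (A.mulVec wG + (σ * wg) • v) + A.mulVec q.1 + (σ * q.2) • v := by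
        abel
      rw [hre, hwshift]
      abel
    rw [harr]
  rw [hshiftpre]
  exact core m ε δ c hε0 hε1 hc32 hδeq wG wg hwnorm _ (hFim hS)
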